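/- If F(t) ≤ F̂(t) + χ for every t ≥ 0, then the DKW-E-Lower output is a sound lower bound on the mean of μ: (1/k)·( (∑_{i=0}^{k−m−2} x_i) + (m+1−χk)·x_{k−m−1} ) ≤ ∫ x dμ(x), where the right-hand side is interpreted as the Lebesgue lower integral ∫⁻ ENNReal.ofReal x dμ in ℝ≥0∞. -/

import Mathlib

open MeasureTheory Finset ENNReal

private lemma abel_aux (c w : ℕ → ℝ) (n : ℕ) :
    ∑ i ∈ Finset.range (n+1), (c (i+1) - c i) * w i
    = c (n+1) * w n - c 0 * w 0 + ∑ i ∈ Finset.range n, c (i+1) * (w i - w (i+1)) := by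
  induction n with
  | zero => simp; ring
  | succ n ih =>
    rw [Finset.sum_range_succ, ih, Finset.sum_range_succ (fun i => c (i+1) * (w i - w (i+1)))]
    ring

/-- Soundness of DKW-E-Lower: on the one-sided DKW event `F ≤ F̂ + χ` (on `[0,∞)`),
the trimmed empirical average is a lower bound on the mean of `μ`. -/
theorem dkw_e_lower_sound
    (μ : Measure ℝ) [IsProbabilityMeasure μ] (hμ : μ (Set.Iio 0) = 0)
    (F : ℝ → ℝ) (hF : ∀ x, F x = (μ (Set.Iic x)).toReal)
    (k : ℕ) (hk : 1 ≤ k)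
    (x : Fin k → ℝ) (hmono : Monotone x) (hx0 : ∀ i, 0 ≤ x i)
    (Fhat : ℝ → ℝ)
    (hFhat : ∀ t : ℝ,
      Fhat t = (1 / (k : ℝ)) * (Finset.univ.filter (fun i : Fin k => x i ≤ t)).card)
    (χ : ℝ) (hχ0 : 0 ≤ χ) (hχ1 : χ < 1)
    (m : ℕ) (hm : m = ⌊χ * k⌋₊) (hmk : m + 1 ≤ k)
    (hband : ∀ t : ℝ, 0 ≤ t → F t ≤ Fhat t + χ) :
    ENNReal.ofReal ((1 / (k : ℝ)) *
        ((∑ i ∈ Finset.univ.filter (fun i : Fin k => (i : ℕ) < k - m - 1), x i)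
          + ((m : ℝ) + 1 - χ * k) * x ⟨k - m - 1, by omega⟩))
      ≤ ∫⁻ y, ENNReal.ofReal y ∂μ := by
  have hkpos : (0:ℝ) < k := by exact_mod_cast hk
  set n : ℕ := k - m - 1 with hn
  have hnk : n < k := by omega
  have hχk : χ * k < m + 1 := by
    rw [hm]; exact_mod_cast Nat.lt_floor_add_one (χ * (k:ℝ))
  have hnr : (n:ℝ) = (k:ℝ) - m - 1 := by
    have h : n + m + 1 = k := by omega
    have := congrArg (Nat.cast : ℕ → ℝ) h
    push_cast at this; linarith
  -- extended samples
  set y : ℕ → ℝ := fun i => x ⟨min i (k-1), by omega⟩ with hy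
  have hyx : ∀ (i : ℕ) (h : i < k), y i = x ⟨i, h⟩ := by
    intro i h
    exact congrArg x (Fin.ext (by simp only; omega))
  have hymono : Monotone y := fun i j hij => hmono (by simp only [Fin.mk_le_mk]; omega)
  have hy0 : ∀ i, 0 ≤ y i := fun i => hx0 _
  set c : ℕ → ℝ := fun i => if i = 0 then 0 else y (i-1) with hc
  have hcsucc : ∀ i, c (i+1) = y i := fun i => by simp [hc]
  have hcmono : Monotone c := by
    apply monotone_nat_of_le_succ
    intro i
    cases i with
    | zero => simpa [hc] using hy0 0
    | succ j => rw [hcsucc, hcsucc]; exact hymono (Nat.le_succ j)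
  have hc0 : ∀ i, 0 ≤ c i := by
    intro i; cases i with
    | zero => simp [hc]
    | succ j => rw [hcsucc]; exact hy0 j
  -- weights
  set w : ℕ → ℝ := fun i => 1 - (i:ℝ) / k - χ with hw
  have hwn : ∀ i ≤ n, 0 ≤ w i := by
    intro i hi
    have h1 : (i:ℝ) ≤ (k:ℝ) - m - 1 := by
      have h2 : (i:ℝ) ≤ (n:ℝ) := Nat.cast_le.2 hi
      linarith
    have h4 : (i:ℝ)/k + χ ≤ 1 := by
      rw [div_add' _ _ _ hkpos.ne', div_le_one hkpos]
      nlinarith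
    simp only [hw]; linarith
  -- key tail bound
  have key : ∀ i ≤ n, ∀ t : ℝ, 0 < t → t < y i →
      ENNReal.ofReal (w i) ≤ μ {a : ℝ | t < a} := by
    intro i hi t ht hty
    have hik : i < k := by omega
    have hcard : ((Finset.univ.filter (fun j : Fin k => x j ≤ t)).card : ℝ) ≤ i := by
      have hsub : (Finset.univ.filter (fun j : Fin k => x j ≤ t))
          ⊆ (Finset.univ.filter (fun j : Fin k => (j:ℕ) < i)) := by
        intro j hj
        simp only [Finset.mem_filter, Finset.mem_univ, true_and] at hj ⊢
        by_contra h
        push_neg at h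
        have h5 : x ⟨i, hik⟩ ≤ x j := hmono (by rw [Fin.le_def]; simp only; omega)
        rw [← hyx i hik] at h5
        linarith
      have h6 : (Finset.univ.filter (fun j : Fin k => (j:ℕ) < i)).card ≤ i := by
        have h6a : ∀ a ∈ Finset.univ.filter (fun j : Fin k => (j:ℕ) < i),
            (a : ℕ) ∈ Finset.range i := by
          intro a ha
          simp only [Finset.mem_filter, Finset.mem_univ, true_and] at ha
          exact Finset.mem_range.2 ha
        have := Finset.card_le_card_of_injOn (fun j : Fin k => (j:ℕ)) h6a
          (fun a _ b _ hab => Fin.ext hab)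
        simpa using this
      exact_mod_cast (Finset.card_le_card hsub).trans h6
    have hFhat_le : Fhat t ≤ (i:ℝ)/k := by
      rw [hFhat t]
      have h6' := mul_le_mul_of_nonneg_left hcard (by positivity : (0:ℝ) ≤ 1/(k:ℝ))
      have h7' : (i:ℝ)/k = (1/(k:ℝ)) * (i:ℝ) := by ring
      rw [h7']
      exact h6'
    have hFt : F t ≤ (i:ℝ)/k + χ := by
      have := hband t ht.le
      linarith
    have hIic : μ (Set.Iic t) ≤ ENNReal.ofReal ((i:ℝ)/k + χ) := by
      have h7 : μ (Set.Iic t) = ENNReal.ofReal (F t) := by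
        rw [hF t, ENNReal.ofReal_toReal (measure_ne_top μ _)]
      rw [h7]
      exact ENNReal.ofReal_le_ofReal hFt
    have hIoi : {a : ℝ | t < a} = Set.Ioi t := rfl
    rw [hIoi, ← Set.compl_Iic, measure_compl measurableSet_Iic (measure_ne_top μ _),
      measure_univ]
    have h8 : ENNReal.ofReal (w i) = 1 - ENNReal.ofReal ((i:ℝ)/k + χ) := by
      rw [← ENNReal.ofReal_one, ← ENNReal.ofReal_sub _ (by positivity)]
      congr 1
      simp only [hw]; ring
    rw [h8]
    exact tsub_le_tsub_left hIic 1
  -- layer cake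
  have h0 : 0 ≤ᵐ[μ] (fun y : ℝ => y) := by
    have h9 : ∀ᵐ a ∂μ, a ∉ Set.Iio 0 := measure_eq_zero_iff_ae_notMem.mp hμ
    filter_upwards [h9] with a ha
    simpa using ha
  have layer : ∫⁻ y, ENNReal.ofReal y ∂μ
      = ∫⁻ t in Set.Ioi (0:ℝ), μ {a : ℝ | t < a} :=
    lintegral_eq_lintegral_meas_lt μ (f := fun y : ℝ => y) h0 aemeasurable_id
  -- disjointness
  have disj : Set.PairwiseDisjoint (↑(Finset.range (n+1)))
      (fun i => Set.Ioo (c i) (c (i+1))) := by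
    intro a _ b _ hab
    rcases lt_or_gt_of_ne hab with h | h
    · apply Set.disjoint_left.2; intro z hz hz'
      have : c (a+1) ≤ c b := hcmono h
      exact absurd (hz.2.trans_le this) (not_lt.2 hz'.1.le)
    · apply Set.disjoint_left.2; intro z hz hz'
      have : c (b+1) ≤ c a := hcmono h
      exact absurd (hz'.2.trans_le this) (not_lt.2 hz.1.le)
  have hsum : ∑ i ∈ Finset.range (n+1), ∫⁻ t in Set.Ioo (c i) (c (i+1)), μ {a : ℝ | t < a}
      ≤ ∫⁻ t in Set.Ioi (0:ℝ), μ {a : ℝ | t < a} := by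
    rw [← lintegral_biUnion_finset disj (fun i _ => measurableSet_Ioo)]
    apply lintegral_mono_set
    intro z hz
    simp only [Set.mem_iUnion, Set.mem_Ioo] at hz
    obtain ⟨i, _, h1, _⟩ := hz
    exact lt_of_le_of_lt (hc0 i) h1
  -- per-interval lower bound
  have hterm : ∀ i ∈ Finset.range (n+1),
      ENNReal.ofReal ((c (i+1) - c i) * w i)
        ≤ ∫⁻ t in Set.Ioo (c i) (c (i+1)), μ {a : ℝ | t < a} := by
    intro i hi
    have hi' : i ≤ n := Nat.lt_succ_iff.mp (Finset.mem_range.mp hi)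
    calc ENNReal.ofReal ((c (i+1) - c i) * w i)
        = ENNReal.ofReal (w i) * volume (Set.Ioo (c i) (c (i+1))) := by
          rw [Real.volume_Ioo, ← ENNReal.ofReal_mul (hwn i hi'), mul_comm (w i)]
      _ = ∫⁻ _ in Set.Ioo (c i) (c (i+1)), ENNReal.ofReal (w i) := by
          rw [setLIntegral_const]
      _ ≤ ∫⁻ t in Set.Ioo (c i) (c (i+1)), μ {a : ℝ | t < a} := by
          apply setLIntegral_mono' measurableSet_Ioo
          intro t htm
          have ht0 : 0 < t := lt_of_le_of_lt (hc0 i) htm.1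
          have hty : t < y i := by rw [← hcsucc i]; exact htm.2
          exact key i hi' t ht0 hty
  -- the arithmetic identity
  have hfilter : ∑ i ∈ Finset.univ.filter (fun i : Fin k => (i : ℕ) < n), x i
      = ∑ j ∈ Finset.range n, y j := by
    have h11 : ∑ i ∈ Finset.univ.filter (fun i : Fin k => (i : ℕ) < n), x i
        = ∑ j ∈ Finset.range k, (if j < n then y j else 0) := by
      rw [Finset.sum_filter, ← Fin.sum_univ_eq_sum_range (fun j => if j < n then y j else 0) k]
      apply Finset.sum_congr rfl
      intro i _
      by_cases h : (i:ℕ) < n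
      · simp only [h, if_true]
        rw [hyx i i.2]
      · simp [h]
    rw [h11, ← Finset.sum_subset (Finset.range_subset_range.2 hnk.le)
      (fun j _ hj => if_neg (fun h => hj (Finset.mem_range.2 h)))]
    exact Finset.sum_congr rfl (fun j hj => if_pos (Finset.mem_range.mp hj))
  have harith : (1 / (k : ℝ)) *
        ((∑ i ∈ Finset.univ.filter (fun i : Fin k => (i : ℕ) < n), x i)
          + ((m : ℝ) + 1 - χ * k) * x ⟨n, hnk⟩)
      = ∑ i ∈ Finset.range (n+1), (c (i+1) - c i) * w i := by
    rw [abel_aux]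
    have hcn : c (n+1) = y n := hcsucc n
    have hc00 : c 0 = 0 := by simp [hc]
    have hxy : x ⟨n, hnk⟩ = y n := (hyx n hnk).symm
    have hstep : ∀ i ∈ Finset.range n, c (i+1) * (w i - w (i+1)) = y i * (1/(k:ℝ)) := by
      intro i _
      rw [hcsucc]
      congr 1
      simp only [hw]
      push_cast
      field_simp
      ring
    rw [Finset.sum_congr rfl hstep, hfilter, hxy, hcn, hc00]
    have hwn' : w n = ((m:ℝ) + 1 - χ * k) / k := by
      simp only [hw, hnr]
      field_simp
      ring
    rw [hwn', ← Finset.sum_mul]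
    field_simp
    ring
  have hofsum : ENNReal.ofReal (∑ i ∈ Finset.range (n+1), (c (i+1) - c i) * w i)
      = ∑ i ∈ Finset.range (n+1), ENNReal.ofReal ((c (i+1) - c i) * w i) :=
    ENNReal.ofReal_sum_of_nonneg (fun i hi =>
      mul_nonneg (sub_nonneg.2 (hcmono (Nat.le_succ i)))
        (hwn i (Nat.lt_succ_iff.mp (Finset.mem_range.mp hi))))
  have final : ENNReal.ofReal (∑ i ∈ Finset.range (n+1), (c (i+1) - c i) * w i)
      ≤ ∫⁻ y, ENNReal.ofReal y ∂μ := by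
    rw [layer, hofsum]
    exact le_trans (Finset.sum_le_sum hterm) hsum
  rw [← harith] at final
  exact final
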